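/- For all positive integers p ≥ q with q = 1 or q = 2, the covering radius of the (p,q)-type group G_{p,q} in S_{p+q} equals p. -/

import Mathlib

open Equiv

/-- The ℓ∞-distance between two permutations of `Fin n`. -/
noncomputable def linfDist {n : ℕ} (f g : Perm (Fin n)) : ℕ :=
  Finset.univ.sup fun i : Fin n => (((f i).val : ℤ) - ((g i).val : ℤ)).natAbs

/-- The distance from a permutation to a code `C`. -/
noncomputable def distToCode {n : ℕ} (f : Perm (Fin n)) (C : Set (Perm (Fin n))) : ℕ :=
  sInf (linfDist f '' C)

/-- The covering radius of a code `C ⊆ Sₙ`. -/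
noncomputable def coveringRadius {n : ℕ} (C : Set (Perm (Fin n))) : ℕ :=
  sSup (Set.range fun f : Perm (Fin n) => distToCode f C)

/-- The relabeling `C^π = π C π⁻¹`. -/
def conjCode {n : ℕ} (π : Perm (Fin n)) (C : Set (Perm (Fin n))) : Set (Perm (Fin n)) :=
  (fun g => π * g * π⁻¹) '' C

/-- Maximum covering radius over all relabelings. -/
noncomputable def Lmax {n : ℕ} (C : Set (Perm (Fin n))) : ℕ :=
  sSup (Set.range fun π : Perm (Fin n) => coveringRadius (conjCode π C))

/-- Minimum covering radius over all relabelings. -/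
noncomputable def Lmin {n : ℕ} (C : Set (Perm (Fin n))) : ℕ :=
  sInf (Set.range fun π : Perm (Fin n) => coveringRadius (conjCode π C))

/-- The `(p,q)`-type group `G_{p,q} = ⟨(1,…,p), (p+1,…,p+q)⟩ ⊆ S_{p+q}`
(using `0`-indexed `Fin (p+q)`). -/
def Gpq (p q : ℕ) : Subgroup (Perm (Fin (p + q))) :=
  Subgroup.closure
    { ((List.finRange p).map (Fin.castLE (Nat.le_add_right p q))).formPerm,
      ((List.finRange q).map (Fin.natAdd p)).formPerm }

/-- The transitive cyclic group `Gₙ = ⟨(1,2,…,n)⟩`. -/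
def Gcyc (n : ℕ) : Subgroup (Perm (Fin n)) := Subgroup.closure {finRotate n}

/-- The natural dihedral group
`Dₙ = ⟨(1,2,…,n), ∏_{i=1}^{⌊n/2⌋} (i, n-i)⟩` (using `0`-indexed `Fin n`). -/
def Dn (n : ℕ) : Subgroup (Perm (Fin n)) :=
  Subgroup.closure
    { finRotate n,
      (((List.finRange (n / 2)).map fun i =>
        Equiv.swap (⟨i.val, by have := i.isLt; omega⟩ : Fin n)
          (⟨n - 2 - i.val, by have := i.isLt; omega⟩ : Fin n)).prod) }

namespace Stmt14

variable (p q : ℕ)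

/-- The first-block list. -/
abbrev L1 : List (Fin (p + q)) := (List.finRange p).map (Fin.castLE (Nat.le_add_right p q))

/-- The second-block list. -/
abbrev L2 : List (Fin (p + q)) := (List.finRange q).map (Fin.natAdd p)

abbrev c1 : Perm (Fin (p + q)) := (L1 p q).formPerm
abbrev c2 : Perm (Fin (p + q)) := (L2 p q).formPerm

lemma mem_L1 (x : Fin (p + q)) : x ∈ L1 p q ↔ x.val < p := by
  simp only [L1, List.mem_map, List.mem_finRange, true_and]
  constructor
  · rintro ⟨a, rfl⟩; exact a.isLt
  · intro h; exact ⟨⟨x.val, h⟩, by ext; simp⟩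

lemma mem_L2 (x : Fin (p + q)) : x ∈ L2 p q ↔ p ≤ x.val := by
  simp only [L2, List.mem_map, List.mem_finRange, true_and]
  constructor
  · rintro ⟨a, rfl⟩; simp [Fin.natAdd]
  · intro h
    refine ⟨⟨x.val - p, by omega⟩, ?_⟩
    ext; simp [Fin.natAdd]; omega

lemma nodup_L1 : (L1 p q).Nodup :=
  (List.nodup_finRange p).map (fun a b h => by
    simpa [Fin.ext_iff] using congrArg Fin.val h)

lemma nodup_L2 : (L2 p q).Nodup :=
  (List.nodup_finRange q).map (fun a b h => by
    have := congrArg Fin.val h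
    simp [Fin.natAdd] at this
    exact Fin.ext this)

lemma length_L1 : (L1 p q).length = p := by simp

lemma length_L2 : (L2 p q).length = q := by simp

lemma c1_fix {x : Fin (p + q)} (h : p ≤ x.val) : c1 p q x = x :=
  List.formPerm_apply_of_notMem (by rw [mem_L1]; omega)

lemma c2_fix {x : Fin (p + q)} (h : x.val < p) : c2 p q x = x :=
  List.formPerm_apply_of_notMem (by rw [mem_L2]; omega)

lemma c1_mem {x : Fin (p + q)} (h : x.val < p) : (c1 p q x).val < p := by
  have := List.formPerm_apply_mem_of_mem ((mem_L1 p q x).2 h)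
  exact (mem_L1 p q _).1 this

lemma c2_mem {x : Fin (p + q)} (h : p ≤ x.val) : p ≤ (c2 p q x).val := by
  have := List.formPerm_apply_mem_of_mem ((mem_L2 p q x).2 h)
  exact (mem_L2 p q _).1 this

lemma c1_block (x : Fin (p + q)) : (c1 p q x).val < p ↔ x.val < p := by
  by_cases h : x.val < p
  · simp [h, c1_mem p q h]
  · rw [c1_fix p q (by omega)]

lemma c2_block (x : Fin (p + q)) : (c2 p q x).val < p ↔ x.val < p := by
  by_cases h : x.val < p
  · rw [c2_fix p q h]
  · have := c2_mem p q (x := x) (by omega)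
    omega

/-- The block-preserving subgroup. -/
def B : Subgroup (Perm (Fin (p + q))) where
  carrier := {g | ∀ x, (g x).val < p ↔ x.val < p}
  one_mem' := fun _ => Iff.rfl
  mul_mem' := by
    intro a b ha hb x
    rw [Perm.mul_apply]
    exact (ha (b x)).trans (hb x)
  inv_mem' := by
    intro a ha x
    have := ha (a⁻¹ x)
    rw [show a (a⁻¹ x) = x from a.apply_symm_apply x] at this
    exact this.symm

lemma Gpq_le_B : Gpq p q ≤ B p q := by
  rw [Gpq, Subgroup.closure_le]
  rintro g (rfl | rfl)
  · exact c1_block p q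
  · exact c2_block p q

lemma block_pres {g : Perm (Fin (p + q))} (hg : g ∈ Gpq p q) (x : Fin (p + q)) :
    (g x).val < p ↔ x.val < p := Gpq_le_B p q hg x

lemma c1_mem_Gpq : c1 p q ∈ Gpq p q :=
  Subgroup.subset_closure (Set.mem_insert _ _)

lemma c2_mem_Gpq : c2 p q ∈ Gpq p q :=
  Subgroup.subset_closure (Set.mem_insert_iff.2 (Or.inr rfl))

lemma linf_ge (f g : Perm (Fin (p + q))) (i : Fin (p + q)) :
    (((f i).val : ℤ) - ((g i).val : ℤ)).natAbs ≤ linfDist f g := by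
  unfold linfDist
  exact Finset.le_sup (f := fun j : Fin (p + q) => (((f j).val : ℤ) - ((g j).val : ℤ)).natAbs)
    (Finset.mem_univ i)

lemma linf_le (f g : Perm (Fin (p + q))) (m : ℕ)
    (h : ∀ i : Fin (p + q), (((f i).val : ℤ) - ((g i).val : ℤ)).natAbs ≤ m) :
    linfDist f g ≤ m := by
  unfold linfDist
  exact Finset.sup_le fun i _ => h i

/-- Upper bound: every permutation is within distance `p` of the code. -/
lemma upper (hq : q = 1 ∨ q = 2) (hpq : q ≤ p) (f : Perm (Fin (p + q))) :
    ∃ g ∈ Gpq p q, linfDist f g ≤ p := by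
  rcases hq with rfl | rfl
  · -- q = 1 : trivial bound
    refine ⟨1, (Gpq p 1).one_mem, linf_le p 1 f 1 p ?_⟩
    intro i
    have h1 := (f i).isLt
    have h2 := ((1 : Perm (Fin (p + 1))) i).isLt
    omega
  · -- q = 2
    have hp2 : 2 ≤ p := hpq
    set k0 : Fin (p + 2) := f.symm ⟨p + 1, by omega⟩ with hk0
    set k1 : Fin (p + 2) := f.symm ⟨0, by omega⟩ with hk1
    -- choose u ∈ {1, c1} with (u k0).val ≠ 0 whenever k0.val < p
    obtain ⟨u, hu_mem, hu_fix, hu_blk, hu0⟩ :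
        ∃ u ∈ Gpq p 2, (∀ x : Fin (p + 2), p ≤ x.val → u x = x) ∧
          (∀ x : Fin (p + 2), (u x).val < p ↔ x.val < p) ∧
          (k0.val < p → (u k0).val ≠ 0) := by
      by_cases h0 : k0.val = 0
      · refine ⟨c1 p 2, c1_mem_Gpq p 2, fun x hx => c1_fix p 2 hx, c1_block p 2, fun hk => ?_⟩
        intro hc
        have hmem : k0 ∈ L1 p 2 := (mem_L1 p 2 k0).2 hk
        have hne : (L1 p 2).formPerm k0 ≠ k0 := by
          rw [List.formPerm_apply_mem_ne_self_iff _ (nodup_L1 p 2) _ hmem, length_L1]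
          omega
        simp only [c1] at hc
        exact hne (by ext; omega)
      · exact ⟨1, (Gpq p 2).one_mem, fun x _ => rfl, fun x => Iff.rfl, fun _ => by
          simpa using h0⟩
    -- choose v ∈ {1, c2} with (v k1).val ≠ p+1 whenever p ≤ k1.val
    obtain ⟨v, hv_mem, hv_fix, hv_blk, hv1⟩ :
        ∃ v ∈ Gpq p 2, (∀ x : Fin (p + 2), x.val < p → v x = x) ∧
          (∀ x : Fin (p + 2), p ≤ x.val → p ≤ (v x).val) ∧
          (p ≤ k1.val → (v k1).val ≠ p + 1) := by
      by_cases h1 : k1.val = p + 1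
      · refine ⟨c2 p 2, c2_mem_Gpq p 2, fun x hx => c2_fix p 2 hx,
          fun x hx => c2_mem p 2 hx, fun hk => ?_⟩
        intro hc
        have hmem : k1 ∈ L2 p 2 := (mem_L2 p 2 k1).2 hk
        have hne : (L2 p 2).formPerm k1 ≠ k1 := by
          rw [List.formPerm_apply_mem_ne_self_iff _ (nodup_L2 p 2) _ hmem, length_L2]
        simp only [c2] at hc
        exact hne (by ext; omega)
      · exact ⟨1, (Gpq p 2).one_mem, fun x _ => rfl, fun x hx => hx, fun _ => by
          simpa using h1⟩
    refine ⟨u * v, (Gpq p 2).mul_mem hu_mem hv_mem, linf_le p 2 f _ p ?_⟩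
    intro i
    have hfi := (f i).isLt
    have hgi := ((u * v) i).isLt
    -- key facts
    have key0 : (f i).val = p + 1 → ((u * v) i).val ≠ 0 := by
      intro hf
      have hik : i = k0 := by
        rw [hk0]
        apply f.injective
        rw [Equiv.apply_symm_apply]
        ext; exact hf
      subst hik
      rw [Perm.mul_apply]
      by_cases hk : k0.val < p
      · rw [hv_fix k0 hk]
        exact hu0 hk
      · have h1 : p ≤ (v k0).val := hv_blk k0 (by omega)
        have h2 : u (v k0) = v k0 := hu_fix _ h1
        rw [h2]; omega
    have key1 : (f i).val = 0 → ((u * v) i).val ≠ p + 1 := by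
      intro hf
      have hik : i = k1 := by
        rw [hk1]
        apply f.injective
        rw [Equiv.apply_symm_apply]
        ext; exact hf
      subst hik
      rw [Perm.mul_apply]
      by_cases hk : k1.val < p
      · rw [hv_fix k1 hk]
        have := (hu_blk k1).2 hk
        omega
      · have h1 : p ≤ (v k1).val := hv_blk k1 (by omega)
        have h2 : u (v k1) = v k1 := hu_fix _ h1
        rw [h2]
        exact hv1 (by omega)
    omega

/-- Lower bound witness. -/
lemma lower (hq1 : 1 ≤ q) (hpq : q ≤ p) {g : Perm (Fin (p + q))} (hg : g ∈ Gpq p q) :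
    p ≤ linfDist (Equiv.swap (⟨0, by omega⟩ : Fin (p + q)) ⟨p, by omega⟩) g := by
  set f : Perm (Fin (p + q)) := Equiv.swap (⟨0, by omega⟩ : Fin (p + q)) ⟨p, by omega⟩ with hf
  have hfp : f ⟨p, by omega⟩ = ⟨0, by omega⟩ := Equiv.swap_apply_right _ _
  have hgp : p ≤ (g ⟨p, by omega⟩).val := by
    have := block_pres p q hg ⟨p, by omega⟩
    simp at this
    omega
  have := linf_ge p q f g ⟨p, by omega⟩
  rw [hfp] at this
  simp only [Fin.val_mk] at this
  omega

end Stmt14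

/-- For all positive integers `p ≥ q` with `q = 1` or `q = 2`,
the covering radius of `G_{p,q}` equals `p`. -/
theorem stmt_14 (p q : ℕ) (hq : q = 1 ∨ q = 2) (hpq : q ≤ p) :
    coveringRadius (Gpq p q : Set (Perm (Fin (p + q)))) = p := by

  classical
  have hq1 : 1 ≤ q := by omega
  set C : Set (Perm (Fin (p + q))) := (Gpq p q : Set (Perm (Fin (p + q)))) with hC
  set f0 : Perm (Fin (p + q)) := Equiv.swap (⟨0, by omega⟩ : Fin (p + q)) ⟨p, by omega⟩ with hf0
  have hub : ∀ f : Perm (Fin (p + q)), distToCode f C ≤ p := by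
    intro f
    obtain ⟨g, hg, hle⟩ := Stmt14.upper p q hq hpq f
    unfold distToCode
    exact le_trans (Nat.sInf_le ⟨g, hg, rfl⟩) hle
  have hlb : distToCode f0 C = p := by
    refine le_antisymm (hub f0) ?_
    unfold distToCode
    refine le_csInf ⟨linfDist f0 1, 1, (Gpq p q).one_mem, rfl⟩ ?_
    rintro b ⟨g, hg, rfl⟩
    exact Stmt14.lower p q hq1 hpq hg
  unfold coveringRadius
  refine le_antisymm ?_ ?_
  · refine csSup_le ⟨distToCode f0 C, f0, rfl⟩ ?_
    rintro b ⟨f, rfl⟩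
    exact hub f
  · calc p = distToCode f0 C := hlb.symm
      _ ≤ sSup (Set.range fun f : Perm (Fin (p + q)) => distToCode f C) :=
        le_csSup ⟨p, by rintro b ⟨f, rfl⟩; exact hub f⟩ ⟨f0, rfl⟩
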